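/- Let R > 0 and m_1, m_2 > 0, let c ∈ ℂ with Im c > 0, and let α > 0 with α ≠ 1. Then the pair of points (w_1, w_2) = (c, α c), which lie on the same half line through the origin, does not satisfy the hyperbolic relative-equilibrium equations with n = 2. -/

import Mathlib

open Complex ComplexConjugate Finset

/-- The quantity `Θ_{3,(k,j)}` appearing in the denominators of the equations of
motion of the curved `n`-body problem in the Poincaré upper half plane. -/
noncomputable def halfTheta (z w : ℂ) : ℝ :=
  (((conj z + z) * (conj w + w)
      - 2 * (((‖z‖ ^ 2 + ‖w‖ ^ 2 : ℝ)) : ℂ)) ^ 2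
    - (conj z - z) ^ 2 * (conj w - w) ^ 2).re

/-- The points `c k` satisfy the hyperbolic relative-equilibrium equations in the
Poincaré upper half plane with parameter `R` and masses `m`. -/
def HyperbolicRelEq (R : ℝ) {n : ℕ} (m : Fin n → ℝ) (c : Fin n → ℂ) : Prop :=
  ∀ k : Fin n,
    (R : ℂ) * (c k + conj (c k)) * c k / (8 * (c k - conj (c k)) ^ 4)
      = ∑ j ∈ Finset.univ.erase k,
          (m j : ℂ) * (c j - conj (c j)) ^ 2 * (c k - c j) * (conj (c j) - c k)
            / (((halfTheta (c k) (c j)) ^ ((3 : ℝ) / 2) : ℝ) : ℂ)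

/-- There is no hyperbolic relative equilibrium of the curved 2-body problem in which
both bodies move along the same half line through the origin. -/
theorem no_hyperbolicRelEq_same_half_line (R m₁ m₂ : ℝ) (hR : 0 < R)
    (hm₁ : 0 < m₁) (hm₂ : 0 < m₂)
    (c : ℂ) (hc : 0 < c.im) (α : ℝ) (hα : 0 < α) (hα1 : α ≠ 1) :
    ¬ HyperbolicRelEq R ![m₁, m₂] ![c, (α : ℂ) * c] := by
  intro h
  have h0 := h 0
  rw [show (Finset.univ.erase (0 : Fin 2)) = {1} from by decide, Finset.sum_singleton] at h0
  simp only [Matrix.cons_val_zero, Matrix.cons_val_one, Matrix.head_cons] at h0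
  set a := c.re with ha
  set b := c.im with hb
  have hb0 : 0 < b := hc
  -- basic identities
  have hc1 : c = (a:ℂ) + (b:ℂ) * I := by rw [ha, hb]; exact (Complex.re_add_im c).symm
  have hc2 : conj c = (a:ℂ) - (b:ℂ) * I := by
    rw [hc1, map_add, map_mul, Complex.conj_ofReal, Complex.conj_ofReal, Complex.conj_I]; ring
  have f1 : c + conj c = 2 * (a:ℂ) := by rw [hc2, hc1]; ring
  have f3 : c * conj c = (a:ℂ)^2 + (b:ℂ)^2 := by
    rw [hc2, hc1]; linear_combination (-(b:ℂ)^2) * Complex.I_sq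
  have f4 : conj ((α:ℂ) * c) = (α:ℂ) * conj c := by
    rw [map_mul, Complex.conj_ofReal]
  have f5 : (c - conj c)^4 = 16 * (b:ℂ)^4 := by
    rw [hc2, hc1]; linear_combination (16*(b:ℂ)^4*(I^2 - 1)) * Complex.I_sq
  have f6 : ((α:ℂ) * c - conj ((α:ℂ) * c))^2 = -4 * (α:ℂ)^2 * (b:ℂ)^2 := by
    rw [f4, hc2, hc1]; linear_combination (4*(α:ℂ)^2*(b:ℂ)^2) * Complex.I_sq
  have habs1 : ‖c‖^2 = a^2 + b^2 := by
    rw [Complex.sq_norm, Complex.normSq_apply, ← ha, ← hb]; ring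
  have habs2 : ‖(α:ℂ) * c‖^2 = α^2 * (a^2 + b^2) := by
    rw [Complex.sq_norm, map_mul, Complex.normSq_ofReal, Complex.normSq_apply, ← ha, ← hb]; ring
  -- value of halfTheta
  have g1 : conj c + c = 2 * (a:ℂ) := by rw [hc2, hc1]; ring
  have g2 : conj ((α:ℂ)*c) + (α:ℂ)*c = 2 * (α:ℂ) * (a:ℂ) := by rw [f4, hc2, hc1]; ring
  have g3 : (conj c - c)^2 = -4 * (b:ℂ)^2 := by
    rw [hc2, hc1]; linear_combination (4*(b:ℂ)^2) * Complex.I_sq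
  have g4 : (conj ((α:ℂ)*c) - (α:ℂ)*c)^2 = -4 * (α:ℂ)^2 * (b:ℂ)^2 := by
    rw [f4, hc2, hc1]; linear_combination (4*(α:ℂ)^2*(b:ℂ)^2) * Complex.I_sq
  have hE : ((conj c + c) * (conj ((α:ℂ)*c) + (α:ℂ)*c)
      - 2 * (((‖c‖ ^ 2 + ‖(α:ℂ)*c‖ ^ 2 : ℝ)) : ℂ)) ^ 2
    - (conj c - c) ^ 2 * (conj ((α:ℂ)*c) - (α:ℂ)*c) ^ 2
      = (((4*α*a^2 - 2*((a^2+b^2) + α^2*(a^2+b^2)))^2 - 16*α^2*b^4 : ℝ) : ℂ) := by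
    rw [g1, g2, g3, g4, habs1, habs2]; push_cast; ring
  have hθ : halfTheta c ((α:ℂ)*c)
      = (4*α*a^2 - 2*((a^2+b^2) + α^2*(a^2+b^2)))^2 - 16*α^2*b^4 := by
    simp only [halfTheta, hE, Complex.ofReal_re]
  have hα2 : (0:ℝ) < (α-1)^2 := by exact lt_of_le_of_ne (sq_nonneg _) (Ne.symm (pow_ne_zero 2 (sub_ne_zero.mpr hα1)))
  have hθpos : 0 < halfTheta c ((α:ℂ)*c) := by
    rw [hθ]
    have hP : (0:ℝ) ≤ 2*a^2*(α-1)^2 := by positivity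
    have hQ : (0:ℝ) ≤ 2*(1+α^2)*b^2 := by positivity
    have hb4 : (0:ℝ) < b^4 := by positivity
    have h1a : (0:ℝ) < (α+1)^2 := by positivity
    nlinarith [mul_pos (mul_pos hb4 hα2) h1a, mul_nonneg hP hQ, sq_nonneg (2*a^2*(α-1)^2)]
  set T := halfTheta c ((α:ℂ)*c) ^ ((3:ℝ)/2) with hT'
  have hT : 0 < T := Real.rpow_pos_of_pos hθpos _
  have hL : (R:ℂ) * (c + conj c) * c / (8 * (c - conj c)^4) * conj c
      = (((R*2*a*(a^2+b^2)/(128*b^4)) : ℝ):ℂ) := by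
    rw [f1, f5]
    rw [show (R:ℂ)*(2*(a:ℂ))*c/(8*(16*(b:ℂ)^4))*conj c
        = (R:ℂ)*(2*(a:ℂ))*(c*conj c)/(8*(16*(b:ℂ)^4)) from by ring, f3]
    push_cast
    ring
  have hR2 : (m₂:ℂ) * ((α:ℂ)*c - conj ((α:ℂ)*c))^2 * (c - (α:ℂ)*c) * (conj ((α:ℂ)*c) - c)
        / ((T:ℝ):ℂ) * conj c
      = (((m₂ * (-4*α^2*b^2) * (1-α) * (a^2+b^2) / T : ℝ)):ℂ) * ((α:ℂ)*conj c - c) := by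
    rw [f6, f4]
    push_cast
    linear_combination ((m₂:ℂ)*(-4*(α:ℂ)^2*(b:ℂ)^2)*(1-(α:ℂ))*((α:ℂ)*conj c - c)/((T:ℂ))) * f3
  have h1 : ((R:ℂ) * (c + conj c) * c / (8 * (c - conj c)^4) * conj c).im
      = ((m₂:ℂ) * ((α:ℂ)*c - conj ((α:ℂ)*c))^2 * (c - (α:ℂ)*c) * (conj ((α:ℂ)*c) - c)
        / ((T:ℝ):ℂ) * conj c).im := by rw [h0]
  rw [hL, hR2, Complex.ofReal_im] at h1
  have him : ((((m₂ * (-4*α^2*b^2) * (1-α) * (a^2+b^2) / T : ℝ)):ℂ) * ((α:ℂ)*conj c - c)).im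
      = (m₂ * (-4*α^2*b^2) * (1-α) * (a^2+b^2) / T) * (-(α*b) - b) := by
    simp only [Complex.mul_im, Complex.mul_re, Complex.sub_im, Complex.sub_re,
      Complex.conj_im, Complex.conj_re, Complex.ofReal_im, Complex.ofReal_re, ← hb]
    ring
  rw [him] at h1
  have hK : m₂ * (-4*α^2*b^2) * (1-α) * (a^2+b^2) / T ≠ 0 := by
    apply div_ne_zero _ hT.ne'
    apply mul_ne_zero (mul_ne_zero (mul_ne_zero hm₂.ne' _) _) (by positivity)
    · nlinarith [mul_pos (mul_pos hα hα) (mul_pos hb0 hb0)]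
    · exact sub_ne_zero.mpr (Ne.symm hα1)
  have hfac : -(α*b) - b ≠ 0 := by nlinarith [mul_pos hα hb0]
  exact (mul_ne_zero hK hfac) h1.symm
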